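/- Let ρ be a real number with −1 < ρ < 1. Then the function t ↦ (1 + t·ρ)/√(1 + 2tρ + t²) is strictly decreasing on the interval (0, ∞). -/
import Mathlib


/-- The first correlation curve `r₁(t) = (1 + t·ρ)/√(1 + 2tρ + t²)` is strictly
decreasing on `(0, ∞)` when `-1 < ρ < 1`. -/
theorem r1_strictAntiOn (ρ : ℝ) (hρ₁ : -1 < ρ) (hρ₂ : ρ < 1) :
    StrictAntiOn (fun t : ℝ => (1 + t * ρ) / Real.sqrt (1 + 2 * t * ρ + t ^ 2))
      (Set.Ioi (0 : ℝ)) := by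
  have hQ : ∀ x : ℝ, 0 < 1 + 2 * x * ρ + x ^ 2 := by
    intro x
    nlinarith [sq_nonneg (x + ρ), sq_nonneg ρ]
  have hD : ∀ x : ℝ,
      HasDerivAt (fun t : ℝ => (1 + t * ρ) / Real.sqrt (1 + 2 * t * ρ + t ^ 2))
        ((ρ * Real.sqrt (1 + 2 * x * ρ + x ^ 2) -
            (1 + x * ρ) * ((2 * ρ + 2 * x) / (2 * Real.sqrt (1 + 2 * x * ρ + x ^ 2)))) /
          (Real.sqrt (1 + 2 * x * ρ + x ^ 2)) ^ 2) x := by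
    intro x
    have h1 : HasDerivAt (fun t : ℝ => 1 + t * ρ) ρ x := by
      simpa using ((hasDerivAt_id x).mul_const ρ).const_add 1
    have h2 : HasDerivAt (fun t : ℝ => 1 + 2 * t * ρ + t ^ 2) (2 * ρ + 2 * x) x := by
      have : HasDerivAt (fun t : ℝ => 1 + 2 * t * ρ + t ^ 2) (0 + 2 * 1 * ρ + 2 * x ^ 1) x := by
        exact (((hasDerivAt_const x (1:ℝ)).add
          (((hasDerivAt_id x).const_mul 2).mul_const ρ)).add (hasDerivAt_pow 2 x))
      simpa using this.congr_deriv (by ring)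
    have hs : Real.sqrt (1 + 2 * x * ρ + x ^ 2) ≠ 0 :=
      ne_of_gt (Real.sqrt_pos.mpr (hQ x))
    have h3 := h2.sqrt (ne_of_gt (hQ x))
    exact h1.div h3 hs
  have hcont : ContinuousOn (fun t : ℝ => (1 + t * ρ) / Real.sqrt (1 + 2 * t * ρ + t ^ 2))
      (Set.Ioi (0 : ℝ)) :=
    fun x _ => ((hD x).continuousAt).continuousWithinAt
  refine strictAntiOn_of_deriv_neg (convex_Ioi 0) hcont ?_
  intro x hx
  rw [interior_Ioi] at hx
  rw [(hD x).deriv]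
  have hQx := hQ x
  have hs : 0 < Real.sqrt (1 + 2 * x * ρ + x ^ 2) := Real.sqrt_pos.mpr hQx
  have hsq : (Real.sqrt (1 + 2 * x * ρ + x ^ 2)) ^ 2 = 1 + 2 * x * ρ + x ^ 2 :=
    Real.sq_sqrt hQx.le
  have hnum : ρ * Real.sqrt (1 + 2 * x * ρ + x ^ 2) -
      (1 + x * ρ) * ((2 * ρ + 2 * x) / (2 * Real.sqrt (1 + 2 * x * ρ + x ^ 2))) < 0 := by
    rw [sub_neg, mul_div_assoc', lt_div_iff₀ (by positivity),
      show ρ * Real.sqrt (1 + 2 * x * ρ + x ^ 2) * (2 * Real.sqrt (1 + 2 * x * ρ + x ^ 2))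
        = 2 * ρ * (Real.sqrt (1 + 2 * x * ρ + x ^ 2)) ^ 2 by ring, hsq]
    have hx' : 0 < x := Set.mem_Ioi.mp hx
    nlinarith [mul_pos hx' (show (0:ℝ) < 1 - ρ ^ 2 by nlinarith)]
  exact div_neg_of_neg_of_pos hnum (by positivity)
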